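/- Let $\mathcal{F}$ be a class of densities, $T$ a real functional on $\mathcal{F}$, and $f\in\mathcal{F}$. Suppose $\{f_n\}\subseteq\mathcal{F}$ satisfies $\sqrt{n}\,h(f_n,f)\to\alpha$ and $|T(f_n)-T(f)|\to\beta$ with $0<\alpha,\beta<\infty$, where $h$ is the Hellinger distance. Then for the absolute-value loss, the local minimax risk satisfies $\liminf_{n\to\infty}\inf_{T_n}\sup_{g\in\mathcal{F}_f} \mathbb{E}_{g^{\otimes n}}|T_n - T(g)| \ge \tfrac{1}{4}\beta e^{-2\alpha^2}$, where $\mathcal{F}_f$ is any open Hellinger ball centered at $f$ containing the $f_n$ eventually, and the infimum is over all estimators $T_n$ based on $n$ i.i.d. observations. -/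

import Mathlib

open MeasureTheory Set Filter Topology
open scoped ENNReal NNReal

section Helpers

variable {X : Type*} [MeasurableSpace X] {μ : Measure X}

private lemma lintegral_pi_prod_aux (μ : Measure X) [SigmaFinite μ] :
    ∀ (n : ℕ) (g : Fin n → X → ℝ≥0∞), (∀ i, Measurable (g i)) →
      ∫⁻ w, ∏ i, g i (w i) ∂(Measure.pi fun _ : Fin n => μ) = ∏ i, ∫⁻ x, g i x ∂μ := by
  intro n
  induction n with
  | zero =>
    intro g hg
    rw [Measure.pi_of_empty (fun _ => μ)]
    simp
  | succ n ih =>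
    intro g hg
    have hmp := measurePreserving_piFinSuccAbove (fun _ : Fin (n+1) => μ) 0
    set e := MeasurableEquiv.piFinSuccAbove (fun _ : Fin (n+1) => X) 0 with he
    have hs0 : ∀ z : X × (Fin n → X), e.symm z 0 = z.1 := by
      intro z
      have h0 : (e (e.symm z)).1 = e.symm z 0 := rfl
      rw [e.apply_symm_apply] at h0
      exact h0.symm
    have hsj : ∀ (z : X × (Fin n → X)) (j : Fin n), e.symm z (Fin.succ j) = z.2 j := by
      intro z j
      have h0 : (e (e.symm z)).2 j = e.symm z ((0 : Fin (n+1)).succAbove j) := rfl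
      rw [e.apply_symm_apply] at h0
      rw [Fin.succAbove_zero] at h0
      exact h0.symm
    have h2 : ∀ z : X × (Fin n → X), ∏ i, g i (e.symm z i)
        = g 0 z.1 * ∏ j : Fin n, g j.succ (z.2 j) := by
      intro z
      rw [Fin.prod_univ_succ, hs0 z]
      exact congrArg _ (Finset.prod_congr rfl fun j _ => by rw [hsj z j])
    have hmeas : Measurable fun y : Fin n → X => ∏ j : Fin n, g j.succ (y j) :=
      Finset.measurable_prod _ fun j _ => (hg j.succ).comp (measurable_pi_apply j)
    calc ∫⁻ w, ∏ i, g i (w i) ∂(Measure.pi fun _ : Fin (n+1) => μ)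
        = ∫⁻ w, ∏ i, g i (e.symm (e w) i) ∂(Measure.pi fun _ : Fin (n+1) => μ) := by
          simp
      _ = ∫⁻ z, ∏ i, g i (e.symm z i) ∂(μ.prod (Measure.pi fun _ : Fin n => μ)) :=
          (hmp.lintegral_map_equiv (fun z => ∏ i, g i (e.symm z i)) e).symm
      _ = ∫⁻ z, g 0 z.1 * ∏ j : Fin n, g j.succ (z.2 j)
            ∂(μ.prod (Measure.pi fun _ : Fin n => μ)) := by simp_rw [h2]
      _ = (∫⁻ x, g 0 x ∂μ) * ∫⁻ y, ∏ j : Fin n, g j.succ (y j)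
            ∂(Measure.pi fun _ : Fin n => μ) :=
          lintegral_prod_mul (hg 0).aemeasurable hmeas.aemeasurable
      _ = ∏ i, ∫⁻ x, g i x ∂μ := by
          rw [ih (fun j => g j.succ) (fun j => hg j.succ), Fin.prod_univ_succ]

private lemma pi_withDensity_aux (μ : Measure X) [SigmaFinite μ]
    (G : X → ℝ≥0∞) (hG : Measurable G) (hGfin : ∫⁻ x, G x ∂μ ≠ ⊤) (n : ℕ) :
    Measure.pi (fun _ : Fin n => μ.withDensity G)
      = (Measure.pi fun _ : Fin n => μ).withDensity fun w => ∏ i, G (w i) := by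
  haveI : IsFiniteMeasure (μ.withDensity G) := isFiniteMeasure_withDensity hGfin
  refine (Measure.pi_eq fun s hs => ?_)
  rw [withDensity_apply _ (MeasurableSet.univ_pi hs)]
  have key : ∫⁻ w in univ.pi s, ∏ i, G (w i) ∂(Measure.pi fun _ : Fin n => μ)
      = ∫⁻ w, ∏ i, (s i).indicator G (w i) ∂(Measure.pi fun _ : Fin n => μ) := by
    rw [← lintegral_indicator (MeasurableSet.univ_pi hs)]
    refine lintegral_congr fun w => ?_
    by_cases hw : w ∈ univ.pi s
    · rw [indicator_of_mem hw]
      exact Finset.prod_congr rfl fun i _ => by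
        rw [indicator_of_mem (hw i (Set.mem_univ i))]
    · rw [indicator_of_notMem hw]
      have : ∃ i, w i ∉ s i := by simpa [Set.mem_pi] using hw
      obtain ⟨i, hi⟩ := this
      exact (Finset.prod_eq_zero (Finset.mem_univ i) (by rw [indicator_of_notMem hi])).symm
  rw [key, lintegral_pi_prod_aux μ n (fun i => (s i).indicator G)
    (fun i => hG.indicator (hs i))]
  exact Finset.prod_congr rfl fun i _ => by
    rw [lintegral_indicator (hs i), withDensity_apply _ (hs i)]

private lemma sq_affinity_le_two_mul_min {Y : Type*} [MeasurableSpace Y] (ν : Measure Y)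
    (P Q : Y → ℝ≥0∞) (hP : Measurable P) (hQ : Measurable Q)
    (hP1 : ∫⁻ y, P y ∂ν ≤ 1) (hQ1 : ∫⁻ y, Q y ∂ν ≤ 1) :
    (∫⁻ y, (P y * Q y) ^ (1/2 : ℝ) ∂ν) ^ 2 ≤ 2 * ∫⁻ y, min (P y) (Q y) ∂ν := by
  set m : Y → ℝ≥0∞ := fun y => min (P y) (Q y) with hm
  set M : Y → ℝ≥0∞ := fun y => max (P y) (Q y) with hM
  have hmM : ∀ y, P y * Q y = m y * M y := fun y => (min_mul_max _ _).symm
  have hconj : (2 : ℝ).HolderConjugate 2 := Real.HolderConjugate.two_two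
  have hmm : Measurable m := hP.min hQ
  have hMm : Measurable M := hP.max hQ
  have hold := ENNReal.lintegral_mul_le_Lp_mul_Lq ν hconj
    (f := fun y => m y ^ (1/2 : ℝ)) (g := fun y => M y ^ (1/2 : ℝ))
    (hmm.pow_const _).aemeasurable (hMm.pow_const _).aemeasurable
  have e1 : ∀ y, (P y * Q y) ^ (1/2 : ℝ) = m y ^ (1/2:ℝ) * M y ^ (1/2:ℝ) := by
    intro y
    rw [hmM y, ENNReal.mul_rpow_of_nonneg _ _ (by norm_num)]
  have e2 : ∀ (x : ℝ≥0∞), (x ^ (1/2:ℝ)) ^ (2:ℝ) = x := by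
    intro x
    rw [← ENNReal.rpow_mul]
    norm_num
  have hMint : ∫⁻ y, M y ∂ν ≤ 2 := by
    calc ∫⁻ y, M y ∂ν ≤ ∫⁻ y, P y + Q y ∂ν :=
          lintegral_mono fun y => max_le le_self_add le_add_self
      _ = (∫⁻ y, P y ∂ν) + ∫⁻ y, Q y ∂ν := lintegral_add_left hP _
      _ ≤ 1 + 1 := add_le_add hP1 hQ1
      _ = 2 := by norm_num
  calc (∫⁻ y, (P y * Q y) ^ (1/2 : ℝ) ∂ν) ^ 2
      = (∫⁻ y, (fun y => m y ^ (1/2:ℝ)) y * (fun y => M y ^ (1/2:ℝ)) y ∂ν) ^ 2 := by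
        simp_rw [e1]
    _ ≤ ((∫⁻ y, (m y ^ (1/2:ℝ)) ^ (2:ℝ) ∂ν) ^ (1/2:ℝ)
          * (∫⁻ y, (M y ^ (1/2:ℝ)) ^ (2:ℝ) ∂ν) ^ (1/2:ℝ)) ^ 2 := by
        gcongr
        exact hold
    _ = (∫⁻ y, m y ∂ν) * ∫⁻ y, M y ∂ν := by
        simp_rw [e2]
        rw [mul_pow, ← ENNReal.rpow_natCast (_ ^ (1/2:ℝ)), ← ENNReal.rpow_natCast (_ ^ (1/2:ℝ)),
          ← ENNReal.rpow_mul, ← ENNReal.rpow_mul]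
        norm_num
    _ ≤ (∫⁻ y, m y ∂ν) * 2 := by gcongr
    _ = 2 * ∫⁻ y, min (P y) (Q y) ∂ν := by rw [mul_comm]

private lemma myIntegrable_of_one {p : X → ℝ} (h : ∫ x, p x ∂μ = 1) : Integrable p μ := by
  by_contra hc
  rw [integral_undef hc] at h
  norm_num at h

private lemma integrable_sqrt_mul' {p q : X → ℝ} (hpm : Measurable p) (hqm : Measurable q)
    (hp0 : ∀ x, 0 ≤ p x) (hq0 : ∀ x, 0 ≤ q x)
    (hpi : Integrable p μ) (hqi : Integrable q μ) :
    Integrable (fun x => Real.sqrt (p x) * Real.sqrt (q x)) μ := by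
  refine Integrable.mono' ((hpi.add hqi).div_const 2)
    ((hpm.sqrt.mul hqm.sqrt).aestronglyMeasurable) (ae_of_all _ fun x => ?_)
  have h1 := Real.sq_sqrt (hp0 x)
  have h2 := Real.sq_sqrt (hq0 x)
  have h3 := sq_nonneg (Real.sqrt (p x) - Real.sqrt (q x))
  have h4 := Real.sqrt_nonneg (p x)
  have h5 := Real.sqrt_nonneg (q x)
  simp only [Pi.add_apply]
  rw [Real.norm_eq_abs, abs_of_nonneg (mul_nonneg h4 h5)]
  nlinarith

private lemma affinity_ennreal' (p q : X → ℝ) (hp0 : ∀ x, 0 ≤ p x) (hq0 : ∀ x, 0 ≤ q x)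
    (hint : Integrable (fun x => Real.sqrt (p x) * Real.sqrt (q x)) μ) :
    ∫⁻ x, (ENNReal.ofReal (p x) * ENNReal.ofReal (q x)) ^ (1/2 : ℝ) ∂μ
      = ENNReal.ofReal (∫ x, Real.sqrt (p x) * Real.sqrt (q x) ∂μ) := by
  have hpt : ∀ x, (ENNReal.ofReal (p x) * ENNReal.ofReal (q x)) ^ (1/2 : ℝ)
      = ENNReal.ofReal (Real.sqrt (p x) * Real.sqrt (q x)) := by
    intro x
    rw [← ENNReal.ofReal_mul (hp0 x), ENNReal.ofReal_rpow_of_nonneg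
      (mul_nonneg (hp0 x) (hq0 x)) (by norm_num : (0:ℝ) ≤ 1/2), ← Real.sqrt_eq_rpow,
      Real.sqrt_mul (hp0 x)]
  simp_rw [hpt]
  rw [← ofReal_integral_eq_lintegral_ofReal hint
    (ae_of_all _ fun x => mul_nonneg (Real.sqrt_nonneg _) (Real.sqrt_nonneg _))]

private lemma lintegral_ofReal_one' (p : X → ℝ) (hp0 : ∀ x, 0 ≤ p x) (hpi : Integrable p μ)
    (hp1 : ∫ x, p x ∂μ = 1) :
    ∫⁻ x, ENNReal.ofReal (p x) ∂μ = 1 := by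
  rw [← ofReal_integral_eq_lintegral_ofReal hpi (ae_of_all _ hp0), hp1, ENNReal.ofReal_one]

private lemma tendsto_one_sub_pow_exp (h : ℕ → ℝ) (hnn : ∀ n, 0 ≤ h n) (α : ℝ) (hα : 0 < α)
    (hlim : Tendsto (fun n : ℕ => Real.sqrt (n : ℝ) * Real.sqrt (h n)) atTop (𝓝 α)) :
    Tendsto (fun n => (1 - h n) ^ (2 * n)) atTop (𝓝 (Real.exp (-2 * α ^ 2))) := by
  have hn2 : Tendsto (fun n : ℕ => (n : ℝ) * h n) atTop (𝓝 (α ^ 2)) := by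
    have h2 := ((continuous_pow 2).tendsto α).comp hlim
    refine h2.congr fun n => ?_
    simp only [Function.comp_apply]
    rw [mul_pow, Real.sq_sqrt (Nat.cast_nonneg n), Real.sq_sqrt (hnn n)]
  have h0 : Tendsto h atTop (𝓝 0) := by
    have hmul : Tendsto (fun n : ℕ => ((n : ℝ) * h n) * (n : ℝ)⁻¹) atTop (𝓝 (α ^ 2 * 0)) :=
      hn2.mul tendsto_inv_atTop_nhds_zero_nat
    rw [mul_zero] at hmul
    refine hmul.congr' ?_
    filter_upwards [eventually_ge_atTop 1] with n hn
    have : (n : ℝ) ≠ 0 := by positivity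
    field_simp
  have hpos : ∀ᶠ n in atTop, 0 < h n := by
    have := hlim.eventually (eventually_gt_nhds (half_lt_self hα))
    filter_upwards [this] with n hn
    by_contra hc
    push_neg at hc
    have : h n = 0 := le_antisymm hc (hnn n)
    rw [this] at hn
    simp at hn
    nlinarith
  have hlt : ∀ᶠ n in atTop, h n < 1 / 2 :=
    h0.eventually (eventually_lt_nhds (by norm_num))
  set L : ℕ → ℝ := fun n => ((2 * n : ℕ) : ℝ) * Real.log (1 - h n) with hL
  have hu : Tendsto (fun n : ℕ => -2 * ((n : ℝ) * h n)) atTop (𝓝 (-2 * α ^ 2)) :=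
    hn2.const_mul (-2)
  have hg : Tendsto (fun n : ℕ => -2 * ((n : ℝ) * h n) * (1 - h n)⁻¹) atTop
      (𝓝 (-2 * α ^ 2)) := by
    have hden : Tendsto (fun n : ℕ => (1 - h n)⁻¹) atTop (𝓝 (1 - 0)⁻¹) :=
      ((tendsto_const_nhds).sub h0).inv₀ (by norm_num)
    have := hu.mul hden
    simpa using this
  have hLlim : Tendsto L atTop (𝓝 (-2 * α ^ 2)) := by
    refine tendsto_of_tendsto_of_tendsto_of_le_of_le' hg hu ?_ ?_
    · filter_upwards [hpos, hlt] with n h1 h2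
      have hd : 0 < 1 - h n := by linarith
      have hlog : -(h n * (1 - h n)⁻¹) ≤ Real.log (1 - h n) := by
        have hinv : 0 < (1 - h n)⁻¹ := inv_pos.mpr hd
        have := Real.log_le_sub_one_of_pos hinv
        rw [Real.log_inv] at this
        have he : (1 - h n)⁻¹ - 1 = h n * (1 - h n)⁻¹ := by field_simp; ring
        linarith [he ▸ this]
      calc -2 * ((n : ℝ) * h n) * (1 - h n)⁻¹
          = ((2 * n : ℕ) : ℝ) * (-(h n * (1 - h n)⁻¹)) := by push_cast; ring
        _ ≤ L n := mul_le_mul_of_nonneg_left hlog (by positivity)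
    · filter_upwards [hpos, hlt] with n h1 h2
      have hd : 0 < 1 - h n := by linarith
      have hlog : Real.log (1 - h n) ≤ -h n := by
        have := Real.log_le_sub_one_of_pos hd
        linarith
      calc L n ≤ ((2 * n : ℕ) : ℝ) * (-h n) := mul_le_mul_of_nonneg_left hlog (by positivity)
        _ = -2 * ((n : ℝ) * h n) := by push_cast; ring
  have hexp := (Real.continuous_exp.tendsto _).comp hLlim
  refine hexp.congr' ?_
  filter_upwards [hpos, hlt] with n h1 h2
  have hd : 0 < 1 - h n := by linarith
  simp only [Function.comp_apply, hL]
  rw [Real.exp_nat_mul, Real.exp_log hd]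

end Helpers

/-- Squared Hellinger distance between two `μ`-densities:
`h²(p,q) = (1/2) ∫ (√p - √q)² dμ`. -/
noncomputable def hellingerSq {X : Type*} [MeasurableSpace X] (μ : Measure X)
    (p q : X → ℝ) : ℝ :=
  (1 / 2) * ∫ x, (Real.sqrt (p x) - Real.sqrt (q x)) ^ 2 ∂μ

section Helpers2

variable {X : Type*} [MeasurableSpace X] {μ : Measure X}

private lemma hellinger_eq_one_sub (p q : X → ℝ) (hpm : Measurable p) (hqm : Measurable q)
    (hp0 : ∀ x, 0 ≤ p x) (hq0 : ∀ x, 0 ≤ q x)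
    (hp1 : ∫ x, p x ∂μ = 1) (hq1 : ∫ x, q x ∂μ = 1) :
    hellingerSq μ p q = 1 - ∫ x, Real.sqrt (p x) * Real.sqrt (q x) ∂μ := by
  have hpi := myIntegrable_of_one hp1
  have hqi := myIntegrable_of_one hq1
  have hsi := integrable_sqrt_mul' hpm hqm hp0 hq0 hpi hqi
  have hptw : ∀ x, (Real.sqrt (p x) - Real.sqrt (q x)) ^ 2
      = (p x + q x) - 2 * (Real.sqrt (p x) * Real.sqrt (q x)) := by
    intro x
    have h1 := Real.sq_sqrt (hp0 x)
    have h2 := Real.sq_sqrt (hq0 x)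
    ring_nf
    nlinarith [Real.sqrt_nonneg (p x), Real.sqrt_nonneg (q x)]
  rw [hellingerSq]
  have hadd : Integrable (fun x => p x + q x) μ := hpi.add hqi
  rw [integral_congr_ae (ae_of_all _ hptw), integral_sub hadd (hsi.const_mul 2),
    integral_add hpi hqi, MeasureTheory.integral_const_mul, hp1, hq1]
  ring

end Helpers2

/-- (Local asymptotic minimax lower bound, Jongbloed's lemma for
absolute-value loss.)  If `√n·h(fₙ,f) → α` and `|T(fₙ) - T(f)| → β` with
`0 < α, β < ∞`, then for any open Hellinger ball `𝓕f` centered at `f` that eventually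
contains the `fₙ`, the minimax risk satisfies
`liminfₙ inf_{Tₙ} sup_{g ∈ 𝓕f} E_{gⁿ}|Tₙ - T(g)| ≥ (1/4)·β·e^{-2α²}`. -/
theorem stmt16 {X : Type*} [MeasurableSpace X] (μ : Measure X) [SigmaFinite μ]
    (𝓕 : Set (X → ℝ))
    (hdens : ∀ p ∈ 𝓕, Measurable p ∧ (∀ x, 0 ≤ p x) ∧ ∫ x, p x ∂μ = 1)
    (T : (X → ℝ) → ℝ) (f : X → ℝ) (hf : f ∈ 𝓕)
    (fn : ℕ → X → ℝ) (hfn : ∀ n, fn n ∈ 𝓕)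
    (α β : ℝ) (hα : 0 < α) (hβ : 0 < β)
    (hH : Tendsto (fun n : ℕ => Real.sqrt n * Real.sqrt (hellingerSq μ (fn n) f))
      atTop (𝓝 α))
    (hT : Tendsto (fun n : ℕ => |T (fn n) - T f|) atTop (𝓝 β))
    (𝓕f : Set (X → ℝ))
    (hball : ∃ r : ℝ, 0 < r ∧
      𝓕f = {g ∈ 𝓕 | Real.sqrt (hellingerSq μ g f) < r})
    (hev : ∀ᶠ n in atTop, fn n ∈ 𝓕f) :
    ENNReal.ofReal ((1 / 4) * β * Real.exp (-2 * α ^ 2)) ≤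
      Filter.atTop.liminf (fun n : ℕ =>
        ⨅ (Tn : (Fin n → X) → ℝ) (_ : Measurable Tn),
          ⨆ g ∈ 𝓕f,
            ∫⁻ w, ENNReal.ofReal |Tn w - T g|
              ∂(Measure.pi fun _ : Fin n =>
                  μ.withDensity fun x => ENNReal.ofReal (g x))) := by
  obtain ⟨hfm, hf0, hf1⟩ := hdens f hf
  obtain ⟨r, hr, hball⟩ := hball
  have hfi : Integrable f μ := myIntegrable_of_one hf1
  -- f belongs to the ball
  have hfF : f ∈ 𝓕f := by
    rw [hball]
    refine ⟨hf, ?_⟩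
    have : hellingerSq μ f f = 0 := by
      simp [hellingerSq]
    rw [this, Real.sqrt_zero]
    exact hr
  -- abbreviations
  set h : ℕ → ℝ := fun n => hellingerSq μ (fn n) f with hh
  have hmn : ∀ n, Measurable (fn n) := fun n => (hdens (fn n) (hfn n)).1
  have h0n : ∀ n x, 0 ≤ fn n x := fun n => (hdens (fn n) (hfn n)).2.1
  have h1n : ∀ n, ∫ x, fn n x ∂μ = 1 := fun n => (hdens (fn n) (hfn n)).2.2
  have hin : ∀ n, Integrable (fn n) μ := fun n => myIntegrable_of_one (h1n n)
  have hSint : ∀ n, Integrable (fun x => Real.sqrt (fn n x) * Real.sqrt (f x)) μ :=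
    fun n => integrable_sqrt_mul' (hmn n) hfm (h0n n) hf0 (hin n) hfi
  have hhe : ∀ n, h n = 1 - ∫ x, Real.sqrt (fn n x) * Real.sqrt (f x) ∂μ :=
    fun n => hellinger_eq_one_sub (fn n) f (hmn n) hfm (h0n n) hf0 (h1n n) hf1
  have hS0 : ∀ n, 0 ≤ ∫ x, Real.sqrt (fn n x) * Real.sqrt (f x) ∂μ := fun n =>
    integral_nonneg fun x => mul_nonneg (Real.sqrt_nonneg _) (Real.sqrt_nonneg _)
  have hnn : ∀ n, 0 ≤ h n := fun n =>
    mul_nonneg (by norm_num) (integral_nonneg fun x => sq_nonneg _)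
  have hone : ∀ n, 1 - h n ≥ 0 := by
    intro n
    rw [hhe n]
    simp [hS0 n]
  -- the sequence of lower bounds
  set c : ℕ → ℝ := fun n => (1 / 4) * |T (fn n) - T f| * (1 - h n) ^ (2 * n) with hc
  have hclim : Tendsto c atTop (𝓝 ((1 / 4) * β * Real.exp (-2 * α ^ 2))) := by
    have hp := tendsto_one_sub_pow_exp h hnn α hα hH
    have := (hT.const_mul (1 / 4 : ℝ)).mul hp
    refine this.congr fun n => by ring
  have hofc : Tendsto (fun n => ENNReal.ofReal (c n)) atTop
      (𝓝 (ENNReal.ofReal ((1 / 4) * β * Real.exp (-2 * α ^ 2)))) :=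
    (ENNReal.continuous_ofReal.tendsto _).comp hclim
  rw [← hofc.liminf_eq]
  refine liminf_le_liminf ?_
  filter_upwards [hev] with n hnF
  -- per-n two-point bound
  refine le_iInf fun Tn => le_iInf fun hTn => ?_
  set P : X → ℝ≥0∞ := fun x => ENNReal.ofReal (f x) with hP
  set Q : X → ℝ≥0∞ := fun x => ENNReal.ofReal (fn n x) with hQ
  have hPm : Measurable P := hfm.ennreal_ofReal
  have hQm : Measurable Q := (hmn n).ennreal_ofReal
  have hP1 : ∫⁻ x, P x ∂μ = 1 := lintegral_ofReal_one' f hf0 hfi hf1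
  have hQ1 : ∫⁻ x, Q x ∂μ = 1 := lintegral_ofReal_one' (fn n) (h0n n) (hin n) (h1n n)
  set π : Measure (Fin n → X) := Measure.pi fun _ : Fin n => μ with hπ
  set DP : (Fin n → X) → ℝ≥0∞ := fun w => ∏ i, P (w i) with hDP
  set DQ : (Fin n → X) → ℝ≥0∞ := fun w => ∏ i, Q (w i) with hDQ
  have hDPm : Measurable DP :=
    Finset.measurable_prod _ fun i _ => hPm.comp (measurable_pi_apply i)
  have hDQm : Measurable DQ :=
    Finset.measurable_prod _ fun i _ => hQm.comp (measurable_pi_apply i)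
  have hDP1 : ∫⁻ w, DP w ∂π = 1 := by
    rw [hπ, lintegral_pi_prod_aux μ n (fun _ => P) (fun _ => hPm)]
    simp [hP1]
  have hDQ1 : ∫⁻ w, DQ w ∂π = 1 := by
    rw [hπ, lintegral_pi_prod_aux μ n (fun _ => Q) (fun _ => hQm)]
    simp [hQ1]
  have hpiP : (Measure.pi fun _ : Fin n => μ.withDensity P) = π.withDensity DP :=
    pi_withDensity_aux μ P hPm (by rw [hP1]; exact ENNReal.one_ne_top) n
  have hpiQ : (Measure.pi fun _ : Fin n => μ.withDensity Q) = π.withDensity DQ :=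
    pi_withDensity_aux μ Q hQm (by rw [hQ1]; exact ENNReal.one_ne_top) n
  set m : (Fin n → X) → ℝ≥0∞ := fun w => min (DP w) (DQ w) with hmdef
  set ν : Measure (Fin n → X) := π.withDensity m with hν
  -- the two risks
  set u : (Fin n → X) → ℝ≥0∞ := fun w => ENNReal.ofReal |Tn w - T f| with hu
  set v : (Fin n → X) → ℝ≥0∞ := fun w => ENNReal.ofReal |Tn w - T (fn n)| with hv
  have hum : Measurable u := ((hTn.sub measurable_const).abs).ennreal_ofReal
  have hvm : Measurable v := ((hTn.sub measurable_const).abs).ennreal_ofReal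
  set Δ : ℝ := |T (fn n) - T f| with hΔ
  -- pointwise triangle inequality
  have htri : ∀ w, ENNReal.ofReal Δ ≤ u w + v w := by
    intro w
    rw [hu, hv, ← ENNReal.ofReal_add (abs_nonneg _) (abs_nonneg _)]
    refine ENNReal.ofReal_le_ofReal ?_
    calc Δ = |T (fn n) - T f| := rfl
      _ ≤ |T (fn n) - Tn w| + |Tn w - T f| := abs_sub_le _ _ _
      _ = |Tn w - T f| + |Tn w - T (fn n)| := by rw [abs_sub_comm (T (fn n)) (Tn w)]; ring
  -- risks dominate the ν-integrals
  have hmono1 : ∫⁻ w, u w ∂ν ≤ ∫⁻ w, u w ∂(π.withDensity DP) :=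
    lintegral_mono' (withDensity_mono (ae_of_all _ fun w => min_le_left _ _)) le_rfl
  have hmono2 : ∫⁻ w, v w ∂ν ≤ ∫⁻ w, v w ∂(π.withDensity DQ) :=
    lintegral_mono' (withDensity_mono (ae_of_all _ fun w => min_le_right _ _)) le_rfl
  -- total mass of ν
  have hνuniv : ν Set.univ = ∫⁻ w, m w ∂π := by
    rw [hν, withDensity_apply _ MeasurableSet.univ, setLIntegral_univ]
  -- lower bound on the sum of the two risks
  have hsum : ENNReal.ofReal Δ * ν Set.univ ≤ (∫⁻ w, u w ∂ν) + ∫⁻ w, v w ∂ν := by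
    rw [← lintegral_add_left hum, ← lintegral_const]
    exact lintegral_mono htri
  -- affinity computation
  have haff : ∫⁻ x, (P x * Q x) ^ (1/2:ℝ) ∂μ = ENNReal.ofReal (1 - h n) := by
    rw [hP, hQ]
    have := affinity_ennreal' f (fn n) hf0 (h0n n)
      (integrable_sqrt_mul' hfm (hmn n) hf0 (h0n n) hfi (hin n))
    rw [this]
    congr 1
    rw [hhe n, sub_sub_cancel]
    exact integral_congr_ae (ae_of_all _ fun x => mul_comm (Real.sqrt (f x)) (Real.sqrt (fn n x)))
  have haffprod : ∫⁻ w, (DP w * DQ w) ^ (1/2:ℝ) ∂π = (ENNReal.ofReal (1 - h n)) ^ n := by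
    have hpt : ∀ w, (DP w * DQ w) ^ (1/2:ℝ) = ∏ i, (P (w i) * Q (w i)) ^ (1/2:ℝ) := by
      intro w
      rw [hDP, hDQ, ← Finset.prod_mul_distrib, ENNReal.prod_rpow_of_nonneg (by norm_num)]
    simp_rw [hpt]
    rw [hπ, lintegral_pi_prod_aux μ n (fun _ x => (P x * Q x) ^ (1/2:ℝ))
      (fun _ => (hPm.mul hQm).pow_const _)]
    rw [Finset.prod_const, haff]
    congr 1
    exact Finset.card_univ.trans (Fintype.card_fin n)
  -- min mass lower bound
  have hminmass : (ENNReal.ofReal (1 - h n)) ^ (2 * n) ≤ 2 * ν Set.univ := by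
    rw [hνuniv]
    calc (ENNReal.ofReal (1 - h n)) ^ (2 * n)
        = ((ENNReal.ofReal (1 - h n)) ^ n) ^ 2 := by rw [← pow_mul, mul_comm]
      _ = (∫⁻ w, (DP w * DQ w) ^ (1/2:ℝ) ∂π) ^ 2 := by rw [haffprod]
      _ ≤ 2 * ∫⁻ w, min (DP w) (DQ w) ∂π :=
          sq_affinity_le_two_mul_min π DP DQ hDPm hDQm hDP1.le hDQ1.le
  -- supremum bounds
  set R : ℝ≥0∞ := ⨆ g ∈ 𝓕f, ∫⁻ w, ENNReal.ofReal |Tn w - T g|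
      ∂(Measure.pi fun _ : Fin n => μ.withDensity fun x => ENNReal.ofReal (g x)) with hR
  have hRf : ∫⁻ w, u w ∂(π.withDensity DP) ≤ R := by
    rw [← hpiP, hR]
    exact le_biSup (fun g => ∫⁻ w, ENNReal.ofReal |Tn w - T g|
      ∂(Measure.pi fun _ : Fin n => μ.withDensity fun x => ENNReal.ofReal (g x))) hfF
  have hRq : ∫⁻ w, v w ∂(π.withDensity DQ) ≤ R := by
    rw [← hpiQ, hR]
    exact le_biSup (fun g => ∫⁻ w, ENNReal.ofReal |Tn w - T g|
      ∂(Measure.pi fun _ : Fin n => μ.withDensity fun x => ENNReal.ofReal (g x))) hnF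
  -- put everything together
  have hkey : ENNReal.ofReal Δ * ENNReal.ofReal ((1 - h n) ^ (2 * n)) ≤ 4 * R := by
    rw [ENNReal.ofReal_pow (hone n)]
    calc ENNReal.ofReal Δ * (ENNReal.ofReal (1 - h n)) ^ (2 * n)
        ≤ ENNReal.ofReal Δ * (2 * ν Set.univ) := mul_le_mul_right hminmass _
      _ = 2 * (ENNReal.ofReal Δ * ν Set.univ) := by ring
      _ ≤ 2 * ((∫⁻ w, u w ∂ν) + ∫⁻ w, v w ∂ν) := by gcongr
      _ ≤ 2 * (R + R) := by
          gcongr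
          · exact hmono1.trans hRf
          · exact hmono2.trans hRq
      _ = 4 * R := by ring
  have h4c : (4 : ℝ≥0∞) * ENNReal.ofReal (c n)
      = ENNReal.ofReal Δ * ENNReal.ofReal ((1 - h n) ^ (2 * n)) := by
    have hΔ0 : 0 ≤ Δ := by rw [hΔ]; exact abs_nonneg _
    rw [← ENNReal.ofReal_mul hΔ0, ← ENNReal.ofReal_ofNat 4,
      ← ENNReal.ofReal_mul (by norm_num : (0:ℝ) ≤ 4)]
    congr 1
    simp only [hc, hΔ]
    ring
  have : (4 : ℝ≥0∞) * ENNReal.ofReal (c n) ≤ 4 * R := h4c ▸ hkey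
  exact (ENNReal.mul_le_mul_iff_right (by norm_num) (by norm_num)).mp this
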